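/- arXiv:2504.21806 — 3 statements merged into one kernel-verified Lean document; each statement's English description precedes it below -/
import Mathlib

section
/- Let (x,y) and (x',y') be orthonormal 2-frames of quaternions (so ‖x‖ = ‖y‖ = ‖x'‖ = ‖y'‖ = 1, Re(x * star y) = 0 and Re(x' * star y') = 0). If μ(x,y) = μ(x',y') and ν(x,y) = ν(x',y'), then there exists θ ∈ ℝ such that x' = cos θ • x + sin θ • y and y' = −sin θ • x + cos θ • y. -/
lemma centralizer_aux (u q : Quaternion ℝ) (hure : u.re = 0) (hu : u ≠ 0)
    (h : q * u = u * q) : ∃ s : ℝ, q = (q.re : Quaternion ℝ) + s • u := by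
  set a := u.imI with ha
  set b := u.imJ with hb
  set c := u.imK with hc
  have hd : a ^ 2 + b ^ 2 + c ^ 2 ≠ 0 := by
    intro h0
    apply hu
    have ha0 : a = 0 := by nlinarith [sq_nonneg a, sq_nonneg b, sq_nonneg c]
    have hb0 : b = 0 := by nlinarith [sq_nonneg a, sq_nonneg b, sq_nonneg c]
    have hc0 : c = 0 := by nlinarith [sq_nonneg a, sq_nonneg b, sq_nonneg c]
    ext <;> simp [hure, ← ha, ← hb, ← hc, ha0, hb0, hc0, Quaternion.re_zero, Quaternion.imI_zero,
        Quaternion.imJ_zero, Quaternion.imK_zero]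
  rw [Quaternion.ext_iff] at h
  obtain ⟨h1, h2, h3, h4⟩ := h
  simp only [Quaternion.re_mul, Quaternion.imI_mul, Quaternion.imJ_mul, Quaternion.imK_mul,
    hure, ← ha, ← hb, ← hc] at h1 h2 h3 h4
  refine ⟨(q.imI * a + q.imJ * b + q.imK * c) / (a ^ 2 + b ^ 2 + c ^ 2), ?_⟩
  ext
  · simp [hure]
  · simp only [Quaternion.imI_add, Quaternion.imI_coe, Quaternion.imI_smul, smul_eq_mul]
    field_simp
    linear_combination (b / 2) * h4 - (c / 2) * h3
  · simp only [Quaternion.imJ_add, Quaternion.imJ_coe, Quaternion.imJ_smul, smul_eq_mul]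
    field_simp
    linear_combination (c / 2) * h2 - (a / 2) * h4
  · simp only [Quaternion.imK_add, Quaternion.imK_coe, Quaternion.imK_smul, smul_eq_mul]
    field_simp
    linear_combination (a / 2) * h3 - (b / 2) * h2

/-- `μ(x,y) = (1/2)(x * star y − y * star x)`. -/
noncomputable def qmu (x y : Quaternion ℝ) : Quaternion ℝ :=
  ((1 : ℝ) / 2) • (x * star y - y * star x)

/-- `ν(x,y) = (1/2)(star x * y − star y * x)`. -/
noncomputable def qnu (x y : Quaternion ℝ) : Quaternion ℝ :=
  ((1 : ℝ) / 2) • (star x * y - star y * x)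

/-- Injectivity of `ξ = (μ,ν)` on the oriented Grassmannian: two orthonormal 2-frames with the
same values of `μ` and `ν` differ by a rotation of the frame. -/
theorem stmt_5 (x y x' y' : Quaternion ℝ)
    (hx : ‖x‖ = 1) (hy : ‖y‖ = 1) (hx' : ‖x'‖ = 1) (hy' : ‖y'‖ = 1)
    (hxy : (x * star y).re = 0) (hxy' : (x' * star y').re = 0)
    (hμ : qmu x y = qmu x' y') (hν : qnu x y = qnu x' y') :
    ∃ θ : ℝ, x' = Real.cos θ • x + Real.sin θ • y ∧
      y' = -Real.sin θ • x + Real.cos θ • y := by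
  have half : ∀ a : Quaternion ℝ, ((1:ℝ)/2) • (a + a) = a := fun a => by
    rw [← two_smul ℝ a, smul_smul]; norm_num
  have hxx : x * star x = 1 := by
    rw [Quaternion.self_mul_star, Quaternion.normSq_eq_norm_mul_self, hx]; norm_num
  have hxx' : x' * star x' = 1 := by
    rw [Quaternion.self_mul_star, Quaternion.normSq_eq_norm_mul_self, hx']; norm_num
  have hsxx' : star x' * x' = 1 := by
    rw [Quaternion.star_mul_self, Quaternion.normSq_eq_norm_mul_self, hx']; norm_num
  -- purity facts
  have hyx : y * star x = -(x * star y) := by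
    have := Quaternion.star_eq_neg.mpr hxy
    rwa [star_mul, star_star] at this
  have hyx' : y' * star x' = -(x' * star y') := by
    have := Quaternion.star_eq_neg.mpr hxy'
    rwa [star_mul, star_star] at this
  have hure : (star x * y).re = 0 := by
    have h : (star x * y).re = (x * star y).re := by
      simp [Quaternion.re_mul]; try ring
    rw [h, hxy]
  have hre2' : (star x' * y').re = 0 := by
    have h : (star x' * y').re = (x' * star y').re := by
      simp [Quaternion.re_mul]; try ring
    rw [h, hxy']
  have e1 : star y * x = -(star x * y) := by
    have := Quaternion.star_eq_neg.mpr hure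
    rwa [star_mul, star_star] at this
  have e1' : star y' * x' = -(star x' * y') := by
    have := Quaternion.star_eq_neg.mpr hre2'
    rwa [star_mul, star_star] at this
  -- μ and ν give equalities
  have hμ' : x * star y = x' * star y' := by
    have h := hμ
    unfold qmu at h
    rw [hyx, hyx', sub_neg_eq_add, sub_neg_eq_add, half, half] at h
    exact h
  have hν' : star x * y = star x' * y' := by
    have h := hν
    unfold qnu at h
    rw [e1, e1', sub_neg_eq_add, sub_neg_eq_add, half, half] at h
    exact h
  have hxq : x * (star x * x') = x' := by rw [← mul_assoc, hxx, one_mul]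
  have hxu : x * (star x * y) = y := by rw [← mul_assoc, hxx, one_mul]
  have hy'1 : y' = x' * (star x * y) := by
    rw [hν', ← mul_assoc, hxx', one_mul]
  have hy'2 : y' = y * (star x * x') := by
    have hs2 : y * star x = y' * star x' := by rw [hyx, hyx', hμ']
    have h3 := congrArg (· * x') hs2
    simp only [mul_assoc, hsxx', mul_one] at h3
    exact h3.symm
  have hcomm : (star x * x') * (star x * y) = (star x * y) * (star x * x') := by
    have hx0 : x ≠ 0 := by
      intro h0; rw [h0, norm_zero] at hx; norm_num at hx
    apply mul_left_cancel₀ hx0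
    calc x * ((star x * x') * (star x * y))
        = (x * (star x * x')) * (star x * y) := (mul_assoc x (star x * x') (star x * y)).symm
      _ = x' * (star x * y) := by rw [hxq]
      _ = y' := hy'1.symm
      _ = y * (star x * x') := hy'2
      _ = (x * (star x * y)) * (star x * x') := by rw [hxu]
      _ = x * ((star x * y) * (star x * x')) := mul_assoc x (star x * y) (star x * x')
  have hnu : ‖star x * y‖ = 1 := by
    rw [norm_mul, norm_star, hx, hy]; norm_num
  have hu0 : star x * y ≠ 0 := by
    intro h0; rw [h0, norm_zero] at hnu; norm_num at hnu
  obtain ⟨s, hs⟩ := centralizer_aux (star x * y) (star x * x') hure hu0 hcomm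
  set c : ℝ := (star x * x').re with hc
  have hnq : ‖star x * x'‖ = 1 := by
    rw [norm_mul, norm_star, hx, hx']; norm_num
  have hnsq : Quaternion.normSq (star x * x') = 1 := by
    rw [Quaternion.normSq_eq_norm_mul_self, hnq]; norm_num
  have hnsu : Quaternion.normSq (star x * y) = 1 := by
    rw [Quaternion.normSq_eq_norm_mul_self, hnu]; norm_num
  have hcs : c ^ 2 + s ^ 2 = 1 := by
    rw [Quaternion.normSq_def'] at hnsq hnsu
    rw [Quaternion.ext_iff] at hs
    obtain ⟨f1, f2, f3, f4⟩ := hs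
    simp only [Quaternion.re_add, Quaternion.imI_add, Quaternion.imJ_add, Quaternion.imK_add,
      Quaternion.re_coe, Quaternion.imI_coe, Quaternion.imJ_coe, Quaternion.imK_coe,
      Quaternion.re_smul, Quaternion.imI_smul, Quaternion.imJ_smul, Quaternion.imK_smul,
      smul_eq_mul, hure, zero_add] at f2 f3 f4
    rw [f2, f3, f4, ← hc] at hnsq
    rw [hure] at hnsu
    linear_combination hnsq - s ^ 2 * hnsu
  have huu : (star x * y) * (star x * y) = -1 := by
    have h1 : star (star x * y) = -(star x * y) := Quaternion.star_eq_neg.mpr hure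
    have h2 : star (star x * y) * (star x * y) = 1 := by
      rw [Quaternion.star_mul_self, hnsu]; norm_num
    rw [h1, neg_mul] at h2
    exact neg_eq_iff_eq_neg.mp h2
  have hx'eq : x' = c • x + s • y := by
    rw [← hxq, hs, mul_add, Quaternion.mul_coe_eq_smul, Algebra.mul_smul_comm, hxu]
  have hy'eq : y' = -s • x + c • y := by
    have key : (star x * x') * (star x * y) = c • (star x * y) - s • 1 := by
      rw [hs, add_mul, Quaternion.coe_mul_eq_smul, smul_mul_assoc, huu, smul_neg]
      simp [smul_neg, sub_eq_add_neg]
    calc y' = x' * (star x * y) := hy'1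
      _ = x * (star x * x') * (star x * y) := by rw [hxq]
      _ = x * ((star x * x') * (star x * y)) := by rw [mul_assoc]
      _ = x * (c • (star x * y) - s • 1) := by rw [key]
      _ = c • (x * (star x * y)) - s • (x * 1) := by
          rw [mul_sub, Algebra.mul_smul_comm, Algebra.mul_smul_comm]
      _ = -s • x + c • y := by rw [hxu, mul_one, neg_smul, sub_eq_neg_add]
  set z : ℂ := ⟨c, s⟩ with hzdef
  have hzabs : ‖z‖ = 1 := by
    rw [Complex.norm_def, Complex.normSq_mk,
      show c * c + s * s = 1 by linear_combination hcs]
    exact Real.sqrt_one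
  have hz0 : z ≠ 0 := by
    intro h0; rw [h0, norm_zero] at hzabs; norm_num at hzabs
  refine ⟨Complex.arg z, ?_, ?_⟩
  · rw [Complex.cos_arg hz0, Complex.sin_arg, hzabs]
    simpa using hx'eq
  · rw [Complex.cos_arg hz0, Complex.sin_arg, hzabs]
    simpa using hy'eq
end

section
/- For every pair of purely imaginary unit quaternions p and q (i.e., ‖p‖ = ‖q‖ = 1 and Re(p) = Re(q) = 0), there exists an orthonormal 2-frame (x,y) of quaternions with μ(x,y) = p and ν(x,y) = q. -/
open Quaternion

private lemma star_of_im' (q : Quaternion ℝ) (h : q.re = 0) : star q = -q := by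
  ext <;> simp [h]

private lemma sq_of_im' (q : Quaternion ℝ) (h : q.re = 0) (hn : ‖q‖ = 1) : q * q = -1 := by
  have h1 : q * star q = ((normSq q : ℝ) : Quaternion ℝ) := Quaternion.self_mul_star q
  rw [star_of_im' q h] at h1
  have h2 : (normSq q : ℝ) = 1 := by
    rw [Quaternion.normSq_eq_norm_mul_self, hn]; ring
  rw [h2] at h1
  simpa [mul_neg, neg_eq_iff_eq_neg] using h1

private lemma conj_of_rel' (p q w : Quaternion ℝ) (hw : w ≠ 0) (hrel : w * q = -p * w) :
    ∃ x : Quaternion ℝ, ‖x‖ = 1 ∧ x * q * star x = -p := by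
  have hw' : ‖w‖ ≠ 0 := norm_ne_zero_iff.mpr hw
  refine ⟨(‖w‖)⁻¹ • w, ?_, ?_⟩
  · rw [norm_smul]
    simp [inv_mul_cancel₀ hw']
  · have hns : w * star w = ((normSq w : ℝ) : Quaternion ℝ) := Quaternion.self_mul_star w
    have h1 : ((‖w‖)⁻¹ • w) * q * star ((‖w‖)⁻¹ • w)
        = ((‖w‖)⁻¹ * (‖w‖)⁻¹) • (w * q * star w) := by
      rw [Quaternion.star_smul]
      simp only [smul_mul_assoc, mul_smul_comm, smul_smul]
    rw [h1, hrel, mul_assoc, hns, Quaternion.mul_coe_eq_smul, smul_smul,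
      Quaternion.normSq_eq_norm_mul_self]
    rw [show (‖w‖)⁻¹ * (‖w‖)⁻¹ * (‖w‖ * ‖w‖) = 1 by field_simp, one_smul]

private lemma key_self' (q : Quaternion ℝ) (hq : ‖q‖ = 1) (hq0 : q.re = 0) :
    ∃ x : Quaternion ℝ, ‖x‖ = 1 ∧ x * q * star x = -q := by
  have hq2 : q * q = -1 := sq_of_im' q hq0 hq
  set i : Quaternion ℝ := ⟨0,1,0,0⟩ with hi
  by_cases hc : q * i - i * q = 0
  · have hthis := hc
    rw [Quaternion.ext_iff] at hthis
    simp [Quaternion.re_mul, Quaternion.imI_mul, Quaternion.imJ_mul, Quaternion.imK_mul] at hthis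
    simp [hi] at hthis
    have hJ : q.imJ = 0 := by linarith [hthis.2]
    have hK : q.imK = 0 := by linarith [hthis.1]
    refine ⟨⟨0,0,1,0⟩, ?_, ?_⟩
    · have h1 : ∀ z : Quaternion ℝ, normSq z = 1 → ‖z‖ = 1 := by
        intro z hz
        have h2 := Quaternion.normSq_eq_norm_mul_self z
        nlinarith [norm_nonneg z]
      apply h1
      obtain ⟨j, hj⟩ : ∃ j : Quaternion ℝ, j = ⟨0,0,1,0⟩ := ⟨_, rfl⟩
      rw [← hj, Quaternion.normSq_def']
      simp [hj]
    · obtain ⟨j, hj⟩ : ∃ j : Quaternion ℝ, j = ⟨0,0,1,0⟩ := ⟨_, rfl⟩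
      rw [← hj]
      ext <;> simp [Quaternion.re_mul, Quaternion.imI_mul, Quaternion.imJ_mul,
        Quaternion.imK_mul] <;> simp [hj, hq0, hJ, hK]
  · refine conj_of_rel' q q (q * i - i * q) hc ?_
    have h2 : (q * i - i * q) * q + q * (q * i - i * q) = -(i * (q*q)) + (q*q) * i := by
      noncomm_ring
    rw [hq2] at h2
    have h3 : (q * i - i * q) * q + q * (q * i - i * q) = 0 := by
      rw [h2]; noncomm_ring
    have := eq_neg_of_add_eq_zero_left h3
    rw [this]; rw [neg_mul]

private lemma key' (p q : Quaternion ℝ) (hp : ‖p‖ = 1) (hq : ‖q‖ = 1)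
    (hp0 : p.re = 0) (hq0 : q.re = 0) :
    ∃ x : Quaternion ℝ, ‖x‖ = 1 ∧ x * q * star x = -p := by
  have hq2 : q * q = -1 := sq_of_im' q hq0 hq
  have hp2 : p * p = -1 := sq_of_im' p hp0 hp
  by_cases hpq : p = q
  · rw [hpq]; exact key_self' q hq hq0
  · refine conj_of_rel' p q (1 + p * q) ?_ ?_
    · intro h0
      apply hpq
      have h1 : p * (1 + p * q) = 0 := by rw [h0, mul_zero]
      rw [mul_add, mul_one, ← mul_assoc, hp2, neg_one_mul] at h1
      exact eq_of_sub_eq_zero (by rw [sub_eq_add_neg]; exact h1)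
    · rw [add_mul, one_mul, mul_assoc, hq2, neg_mul, mul_add, mul_one, ← mul_assoc, hp2]
      noncomm_ring

/-- Surjectivity of `ξ = (μ,ν)` from the Stiefel manifold `V₂(ℝ⁴)` onto `S² × S²`: every pair
of purely imaginary unit quaternions is realized by an orthonormal 2-frame. -/
theorem stmt_6 (p q : Quaternion ℝ) (hp : ‖p‖ = 1) (hq : ‖q‖ = 1)
    (hp0 : p.re = 0) (hq0 : q.re = 0) :
    ∃ x y : Quaternion ℝ, ‖x‖ = 1 ∧ ‖y‖ = 1 ∧ (x * star y).re = 0 ∧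
      qmu x y = p ∧ qnu x y = q := by
  obtain ⟨x, hx, hxc⟩ := key' p q hp hq hp0 hq0
  have hsx : star x * x = 1 := by
    rw [Quaternion.star_mul_self, Quaternion.normSq_eq_norm_mul_self, hx, one_mul,
      Quaternion.coe_one]
  have h1 : x * star (x * q) = p := by
    rw [star_mul, star_of_im' q hq0, neg_mul, mul_neg, ← mul_assoc, hxc, neg_neg]
  have h2 : (x * q) * star x = -p := hxc
  have h3 : star x * (x * q) = q := by rw [← mul_assoc, hsx, one_mul]
  have h4 : star (x * q) * x = -q := by
    rw [star_mul, star_of_im' q hq0, mul_assoc, hsx, mul_one]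
  refine ⟨x, x * q, hx, by rw [norm_mul, hx, hq, one_mul], by rw [h1, hp0], ?_, ?_⟩
  · rw [qmu, h1, h2, sub_neg_eq_add, ← two_smul ℝ p, smul_smul]; norm_num
  · rw [qnu, h3, h4, sub_neg_eq_add, ← two_smul ℝ q, smul_smul]; norm_num
end

section
/- For every 3×3 real matrix A with AᵀA = I and det A = 1 (i.e., A ∈ SO(3)), there exists a unit quaternion q such that for all real numbers a, b, c: q * (a•i + b•j + c•k) * star q = a'•i + b'•j + c'•k, where (a', b', c')ᵀ = A · (a, b, c)ᵀ. That is, every rotation of the purely imaginary quaternions is realized by conjugation by a unit quaternion. -/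
/-- The imaginary unit `i` of the quaternions. -/
def qi : Quaternion ℝ := ⟨0, 1, 0, 0⟩

/-- The imaginary unit `j` of the quaternions. -/
def qj : Quaternion ℝ := ⟨0, 0, 1, 0⟩

/-- The imaginary unit `k` of the quaternions. -/
def qk : Quaternion ℝ := ⟨0, 0, 0, 1⟩

lemma conj_formula (q : Quaternion ℝ) (a b c w x y z : ℝ)
    (h1 : q.re = w) (h2 : q.imI = x) (h3 : q.imJ = y) (h4 : q.imK = z) :
    q * (a • qi + b • qj + c • qk) * star q =
      ((w^2+x^2-y^2-z^2)*a + 2*(x*y-w*z)*b + 2*(x*z+w*y)*c) • qi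
      + (2*(x*y+w*z)*a + (w^2-x^2+y^2-z^2)*b + 2*(y*z-w*x)*c) • qj
      + (2*(x*z-w*y)*a + 2*(y*z+w*x)*b + (w^2-x^2-y^2+z^2)*c) • qk := by
  subst h1 h2 h3 h4
  ext <;> simp [Quaternion.re_smul] <;> simp [qi, qj, qk] <;> ring

lemma build (A : Matrix (Fin 3) (Fin 3) ℝ) (w x y z : ℝ)
    (hn : w^2+x^2+y^2+z^2 = 1)
    (e00 : w^2+x^2-y^2-z^2 = A 0 0) (e01 : 2*(x*y-w*z) = A 0 1) (e02 : 2*(x*z+w*y) = A 0 2)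
    (e10 : 2*(x*y+w*z) = A 1 0) (e11 : w^2-x^2+y^2-z^2 = A 1 1) (e12 : 2*(y*z-w*x) = A 1 2)
    (e20 : 2*(x*z-w*y) = A 2 0) (e21 : 2*(y*z+w*x) = A 2 1) (e22 : w^2-x^2-y^2+z^2 = A 2 2) :
    ∃ q : Quaternion ℝ, ‖q‖ = 1 ∧ ∀ a b c : ℝ,
      q * (a • qi + b • qj + c • qk) * star q =
        (A.mulVec ![a, b, c] 0) • qi + (A.mulVec ![a, b, c] 1) • qj +
          (A.mulVec ![a, b, c] 2) • qk := by
  refine ⟨⟨w,x,y,z⟩, ?_, ?_⟩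
  · have hq : Quaternion.normSq ⟨w,x,y,z⟩ = 1 := by
      erw [Quaternion.normSq_def']; exact hn
    erw [norm_eq_sqrt_real_inner, Quaternion.inner_self, hq, Real.sqrt_one]
  · intro a b c
    rw [conj_formula ⟨w,x,y,z⟩ a b c w x y z rfl rfl rfl rfl]
    simp only [Matrix.mulVec, dotProduct, Fin.sum_univ_three,
      Matrix.cons_val_zero, Matrix.cons_val_one, Matrix.head_cons, Matrix.cons_val_two,
      Matrix.tail_cons]
    rw [← e00, ← e01, ← e02, ← e10, ← e11, ← e12, ← e20, ← e21, ← e22]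

lemma build' (A : Matrix (Fin 3) (Fin 3) ℝ) (W X Y Z s : ℝ) (hs : s ≠ 0)
    (hn : W^2+X^2+Y^2+Z^2 = 4*s^2)
    (f00 : W^2+X^2-Y^2-Z^2 = (4*s^2) * A 0 0) (f01 : 2*(X*Y-W*Z) = (4*s^2) * A 0 1)
    (f02 : 2*(X*Z+W*Y) = (4*s^2) * A 0 2)
    (f10 : 2*(X*Y+W*Z) = (4*s^2) * A 1 0) (f11 : W^2-X^2+Y^2-Z^2 = (4*s^2) * A 1 1)
    (f12 : 2*(Y*Z-W*X) = (4*s^2) * A 1 2)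
    (f20 : 2*(X*Z-W*Y) = (4*s^2) * A 2 0) (f21 : 2*(Y*Z+W*X) = (4*s^2) * A 2 1)
    (f22 : W^2-X^2-Y^2+Z^2 = (4*s^2) * A 2 2) :
    ∃ q : Quaternion ℝ, ‖q‖ = 1 ∧ ∀ a b c : ℝ,
      q * (a • qi + b • qj + c • qk) * star q =
        (A.mulVec ![a, b, c] 0) • qi + (A.mulVec ![a, b, c] 1) • qj +
          (A.mulVec ![a, b, c] 2) • qk := by
  refine build A (W/(2*s)) (X/(2*s)) (Y/(2*s)) (Z/(2*s)) ?_ ?_ ?_ ?_ ?_ ?_ ?_ ?_ ?_ ?_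
  · field_simp; linear_combination hn
  · field_simp; linear_combination f00
  · field_simp; linear_combination (1/2 : ℝ) * f01
  · field_simp; linear_combination (1/2 : ℝ) * f02
  · field_simp; linear_combination (1/2 : ℝ) * f10
  · field_simp; linear_combination f11
  · field_simp; linear_combination (1/2 : ℝ) * f12
  · field_simp; linear_combination (1/2 : ℝ) * f20
  · field_simp; linear_combination (1/2 : ℝ) * f21
  · field_simp; linear_combination f22

/-- Every `A ∈ SO(3)`, acting on the purely imaginary quaternions in the orthonormal basis
`(i, j, k)`, is realized by conjugation by some unit quaternion `q`. -/
theorem stmt_9 (A : Matrix (Fin 3) (Fin 3) ℝ)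
    (hA : A ∈ Matrix.specialOrthogonalGroup (Fin 3) ℝ) :
    ∃ q : Quaternion ℝ, ‖q‖ = 1 ∧ ∀ a b c : ℝ,
      q * (a • qi + b • qj + c • qk) * star q =
        (A.mulVec ![a, b, c] 0) • qi + (A.mulVec ![a, b, c] 1) • qj +
          (A.mulVec ![a, b, c] 2) • qk := by
  have hdet : A.det = 1 := hA.2
  have hU1 : star A * A = 1 := hA.1.1
  have hU2 : A * star A = 1 := hA.1.2
  have hTA : A.transpose * A = 1 := by rwa [Matrix.star_eq_conjTranspose, Matrix.conjTranspose_eq_transpose_of_trivial] at hU1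
  have hAT : A * A.transpose = 1 := by rwa [Matrix.star_eq_conjTranspose, Matrix.conjTranspose_eq_transpose_of_trivial] at hU2
  have hadj : A.adjugate = A.transpose := by
    calc A.adjugate = 1 * A.adjugate := (one_mul _).symm
      _ = (A.transpose * A) * A.adjugate := by rw [hTA]
      _ = A.transpose * (A * A.adjugate) := by rw [Matrix.mul_assoc]
      _ = A.transpose := by rw [Matrix.mul_adjugate, hdet, one_smul, Matrix.mul_one]
  have hc00 : A 0 0 * A 0 0 + A 1 0 * A 1 0 + A 2 0 * A 2 0 = 1 := by
    have h := congrFun (congrFun hTA 0) 0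
    simp [Matrix.mul_apply, Fin.sum_univ_three, Matrix.one_apply, Matrix.transpose_apply] at h
    linear_combination h
  have hr00 : A 0 0 * A 0 0 + A 0 1 * A 0 1 + A 0 2 * A 0 2 = 1 := by
    have h := congrFun (congrFun hAT 0) 0
    simp [Matrix.mul_apply, Fin.sum_univ_three, Matrix.one_apply, Matrix.transpose_apply] at h
    linear_combination h
  have hc01 : A 0 0 * A 0 1 + A 1 0 * A 1 1 + A 2 0 * A 2 1 = 0 := by
    have h := congrFun (congrFun hTA 0) 1
    simp [Matrix.mul_apply, Fin.sum_univ_three, Matrix.one_apply, Matrix.transpose_apply] at h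
    linear_combination h
  have hr01 : A 0 0 * A 1 0 + A 0 1 * A 1 1 + A 0 2 * A 1 2 = 0 := by
    have h := congrFun (congrFun hAT 0) 1
    simp [Matrix.mul_apply, Fin.sum_univ_three, Matrix.one_apply, Matrix.transpose_apply] at h
    linear_combination h
  have hc02 : A 0 0 * A 0 2 + A 1 0 * A 1 2 + A 2 0 * A 2 2 = 0 := by
    have h := congrFun (congrFun hTA 0) 2
    simp [Matrix.mul_apply, Fin.sum_univ_three, Matrix.one_apply, Matrix.transpose_apply] at h
    linear_combination h
  have hr02 : A 0 0 * A 2 0 + A 0 1 * A 2 1 + A 0 2 * A 2 2 = 0 := by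
    have h := congrFun (congrFun hAT 0) 2
    simp [Matrix.mul_apply, Fin.sum_univ_three, Matrix.one_apply, Matrix.transpose_apply] at h
    linear_combination h
  have hc11 : A 0 1 * A 0 1 + A 1 1 * A 1 1 + A 2 1 * A 2 1 = 1 := by
    have h := congrFun (congrFun hTA 1) 1
    simp [Matrix.mul_apply, Fin.sum_univ_three, Matrix.one_apply, Matrix.transpose_apply] at h
    linear_combination h
  have hr11 : A 1 0 * A 1 0 + A 1 1 * A 1 1 + A 1 2 * A 1 2 = 1 := by
    have h := congrFun (congrFun hAT 1) 1
    simp [Matrix.mul_apply, Fin.sum_univ_three, Matrix.one_apply, Matrix.transpose_apply] at h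
    linear_combination h
  have hc12 : A 0 1 * A 0 2 + A 1 1 * A 1 2 + A 2 1 * A 2 2 = 0 := by
    have h := congrFun (congrFun hTA 1) 2
    simp [Matrix.mul_apply, Fin.sum_univ_three, Matrix.one_apply, Matrix.transpose_apply] at h
    linear_combination h
  have hr12 : A 1 0 * A 2 0 + A 1 1 * A 2 1 + A 1 2 * A 2 2 = 0 := by
    have h := congrFun (congrFun hAT 1) 2
    simp [Matrix.mul_apply, Fin.sum_univ_three, Matrix.one_apply, Matrix.transpose_apply] at h
    linear_combination h
  have hc22 : A 0 2 * A 0 2 + A 1 2 * A 1 2 + A 2 2 * A 2 2 = 1 := by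
    have h := congrFun (congrFun hTA 2) 2
    simp [Matrix.mul_apply, Fin.sum_univ_three, Matrix.one_apply, Matrix.transpose_apply] at h
    linear_combination h
  have hr22 : A 2 0 * A 2 0 + A 2 1 * A 2 1 + A 2 2 * A 2 2 = 1 := by
    have h := congrFun (congrFun hAT 2) 2
    simp [Matrix.mul_apply, Fin.sum_univ_three, Matrix.one_apply, Matrix.transpose_apply] at h
    linear_combination h
  have hg00 : A 1 1 * A 2 2 - A 1 2 * A 2 1 = A 0 0 := by
    have h := congrFun (congrFun hadj 0) 0
    rw [Matrix.adjugate_fin_three] at h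
    simp [Matrix.transpose_apply] at h
    linear_combination h
  have hg01 : -(A 0 1 * A 2 2) + A 0 2 * A 2 1 = A 1 0 := by
    have h := congrFun (congrFun hadj 0) 1
    rw [Matrix.adjugate_fin_three] at h
    simp [Matrix.transpose_apply] at h
    linear_combination h
  have hg02 : A 0 1 * A 1 2 - A 0 2 * A 1 1 = A 2 0 := by
    have h := congrFun (congrFun hadj 0) 2
    rw [Matrix.adjugate_fin_three] at h
    simp [Matrix.transpose_apply] at h
    linear_combination h
  have hg10 : -(A 1 0 * A 2 2) + A 1 2 * A 2 0 = A 0 1 := by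
    have h := congrFun (congrFun hadj 1) 0
    rw [Matrix.adjugate_fin_three] at h
    simp [Matrix.transpose_apply] at h
    linear_combination h
  have hg11 : A 0 0 * A 2 2 - A 0 2 * A 2 0 = A 1 1 := by
    have h := congrFun (congrFun hadj 1) 1
    rw [Matrix.adjugate_fin_three] at h
    simp [Matrix.transpose_apply] at h
    linear_combination h
  have hg12 : -(A 0 0 * A 1 2) + A 0 2 * A 1 0 = A 2 1 := by
    have h := congrFun (congrFun hadj 1) 2
    rw [Matrix.adjugate_fin_three] at h
    simp [Matrix.transpose_apply] at h
    linear_combination h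
  have hg20 : A 1 0 * A 2 1 - A 1 1 * A 2 0 = A 0 2 := by
    have h := congrFun (congrFun hadj 2) 0
    rw [Matrix.adjugate_fin_three] at h
    simp [Matrix.transpose_apply] at h
    linear_combination h
  have hg21 : -(A 0 0 * A 2 1) + A 0 1 * A 2 0 = A 1 2 := by
    have h := congrFun (congrFun hadj 2) 1
    rw [Matrix.adjugate_fin_three] at h
    simp [Matrix.transpose_apply] at h
    linear_combination h
  have hg22 : A 0 0 * A 1 1 - A 0 1 * A 1 0 = A 2 2 := by
    have h := congrFun (congrFun hadj 2) 2
    rw [Matrix.adjugate_fin_three] at h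
    simp [Matrix.transpose_apply] at h
    linear_combination h
  rcases le_or_gt 1 (1 + A 0 0 + A 1 1 + A 2 2) with ht0 | ht0
  · -- case 0
    set s := Real.sqrt (1 + A 0 0 + A 1 1 + A 2 2) with hsdef
    have hss : s ^ 2 = 1 + A 0 0 + A 1 1 + A 2 2 := Real.sq_sqrt (by linarith)
    have hs : s ≠ 0 := by
      intro h0
      rw [h0] at hss
      simp at hss
      linarith
    refine build' A (s^2) (A 2 1 - A 1 2) (A 0 2 - A 2 0) (A 1 0 - A 0 1) s hs ?_ ?_ ?_ ?_ ?_ ?_ ?_ ?_ ?_ ?_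
    · linear_combination (-3 + s*s + (A 2 2) + (A 1 1) + (A 0 0)) * hss + (1) * hc00 + (1 + 2*(A 2 2)) * hc11 + (-2*(A 2 1) - 2*(A 1 2)) * hc12 + (1 + 2*(A 1 1)) * hc22 + (2 - 2*(A 2 2) - 2*(A 1 1)) * hg00 + (2*(A 0 1)) * hg01 + (2*(A 0 2)) * hg02
    · linear_combination (1 + s*s + (A 2 2) + (A 1 1) - 3*(A 0 0)) * hss + (-1) * hc00 + (-2) * hr00 + (1 - 2*(A 2 2)) * hc11 + (2*(A 2 1) + 2*(A 1 2)) * hc12 + (1 - 2*(A 1 1)) * hc22 + (2 + 2*(A 2 2) + 2*(A 1 1)) * hg00 + (-2*(A 0 1)) * hg01 + (-2*(A 0 2)) * hg02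
    · linear_combination (-2*(A 1 0) - 2*(A 0 1)) * hss + (-2*(A 0 1)) * hr00 + (-2 + 2*(A 0 0)) * hc01 + (-2 - 2*(A 1 1)) * hr01 + (-2*(A 2 1)) * hr02 + (2*(A 0 1)) * hc11 + (2*(A 0 1)) * hc22 + (2 + 2*(A 2 2)) * hg01 + (-2*(A 1 2)) * hg02
    · linear_combination (-2*(A 2 0) - 2*(A 0 2)) * hss + (-2) * hc02 + (-2) * hr02 + (2*(A 0 2)) * hc11 + (-2*(A 0 1)) * hc12 + (-2*(A 2 1)) * hg01 + (2 + 2*(A 1 1)) * hg02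
    · linear_combination (-2*(A 1 0) - 2*(A 0 1)) * hss + (-2*(A 0 1)) * hr00 + (-2 + 2*(A 0 0)) * hc01 + (-2 - 2*(A 1 1)) * hr01 + (-2*(A 2 1)) * hr02 + (2*(A 0 1)) * hc11 + (2*(A 0 1)) * hc22 + (2 + 2*(A 2 2)) * hg01 + (-2*(A 1 2)) * hg02
    · linear_combination (1 + s*s + (A 2 2) - 3*(A 1 1) + (A 0 0)) * hss + (1) * hc00 + (-1 - 2*(A 2 2)) * hc11 + (-2) * hr11 + (2*(A 2 1) - 2*(A 1 2)) * hc12 + (1 + 2*(A 1 1)) * hc22 + (-2 - 2*(A 2 2) + 2*(A 1 1)) * hg00 + (-2*(A 0 1)) * hg01 + (2*(A 0 2)) * hg02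
    · linear_combination (-2*(A 2 1) - 2*(A 1 2)) * hss + (-2*(A 2 1)) * hc00 + (2*(A 2 1)) * hr00 + (2*(A 2 0)) * hc01 + (-2*(A 0 1)) * hr02 + (2*(A 1 2)) * hc11 + (2*(A 2 1)) * hr11 + (-2 - 2*(A 1 1)) * hc12 + (-2 - 2*(A 1 1)) * hr12 + (2*(A 2 1) + 2*(A 1 2)) * hg00 + (-2*(A 0 2)) * hg01 + (-2*(A 0 1)) * hg02
    · linear_combination (-2*(A 2 0) - 2*(A 0 2)) * hss + (-2) * hc02 + (-2) * hr02 + (2*(A 0 2)) * hc11 + (-2*(A 0 1)) * hc12 + (-2*(A 2 1)) * hg01 + (2 + 2*(A 1 1)) * hg02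
    · linear_combination (-2*(A 2 1) - 2*(A 1 2)) * hss + (-2*(A 2 1)) * hc00 + (2*(A 2 1)) * hr00 + (2*(A 2 0)) * hc01 + (-2*(A 0 1)) * hr02 + (2*(A 1 2)) * hc11 + (2*(A 2 1)) * hr11 + (-2 - 2*(A 1 1)) * hc12 + (-2 - 2*(A 1 1)) * hr12 + (2*(A 2 1) + 2*(A 1 2)) * hg00 + (-2*(A 0 2)) * hg01 + (-2*(A 0 1)) * hg02
    · linear_combination (1 + s*s - 3*(A 2 2) + (A 1 1) + (A 0 0)) * hss + (-1) * hc00 + (2) * hr00 + (-1 + 2*(A 2 2)) * hc11 + (2) * hr11 + (-2*(A 2 1) + 2*(A 1 2)) * hc12 + (-3 - 2*(A 1 1)) * hc22 + (-2 + 2*(A 2 2) - 2*(A 1 1)) * hg00 + (2*(A 0 1)) * hg01 + (-2*(A 0 2)) * hg02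
  rcases le_or_gt 1 (1 + A 0 0 - A 1 1 - A 2 2) with ht1 | ht1
  · -- case 1
    set s := Real.sqrt (1 + A 0 0 - A 1 1 - A 2 2) with hsdef
    have hss : s ^ 2 = 1 + A 0 0 - A 1 1 - A 2 2 := Real.sq_sqrt (by linarith)
    have hs : s ≠ 0 := by
      intro h0
      rw [h0] at hss
      simp at hss
      linarith
    refine build' A (A 2 1 - A 1 2) (s^2) (A 0 1 + A 1 0) (A 0 2 + A 2 0) s hs ?_ ?_ ?_ ?_ ?_ ?_ ?_ ?_ ?_ ?_
    · linear_combination (-3 + s*s - (A 2 2) - (A 1 1) + (A 0 0)) * hss + (1) * hc00 + (1 - 2*(A 2 2)) * hc11 + (2*(A 2 1) + 2*(A 1 2)) * hc12 + (1 - 2*(A 1 1)) * hc22 + (2 + 2*(A 2 2) + 2*(A 1 1)) * hg00 + (-2*(A 0 1)) * hg01 + (-2*(A 0 2)) * hg02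
    · linear_combination (1 + s*s - (A 2 2) - (A 1 1) - 3*(A 0 0)) * hss + (-1) * hc00 + (-2) * hr00 + (1 + 2*(A 2 2)) * hc11 + (-2*(A 2 1) - 2*(A 1 2)) * hc12 + (1 + 2*(A 1 1)) * hc22 + (2 - 2*(A 2 2) - 2*(A 1 1)) * hg00 + (2*(A 0 1)) * hg01 + (2*(A 0 2)) * hg02
    · linear_combination (2*(A 1 0) - 2*(A 0 1)) * hss + (-2*(A 0 1)) * hr00 + (-2 + 2*(A 0 0)) * hc01 + (2 - 2*(A 1 1)) * hr01 + (-2*(A 2 1)) * hr02 + (2*(A 0 1)) * hc11 + (2*(A 0 1)) * hc22 + (-2 + 2*(A 2 2)) * hg01 + (-2*(A 1 2)) * hg02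
    · linear_combination (2*(A 2 0) - 2*(A 0 2)) * hss + (-2) * hc02 + (2) * hr02 + (2*(A 0 2)) * hc11 + (-2*(A 0 1)) * hc12 + (-2*(A 2 1)) * hg01 + (-2 + 2*(A 1 1)) * hg02
    · linear_combination (-2*(A 1 0) + 2*(A 0 1)) * hss + (2*(A 0 1)) * hr00 + (2 - 2*(A 0 0)) * hc01 + (-2 + 2*(A 1 1)) * hr01 + (2*(A 2 1)) * hr02 + (-2*(A 0 1)) * hc11 + (-2*(A 0 1)) * hc22 + (2 - 2*(A 2 2)) * hg01 + (2*(A 1 2)) * hg02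
    · linear_combination (-1 - s*s + (A 2 2) - 3*(A 1 1) - (A 0 0)) * hss + (-1) * hc00 + (1 - 2*(A 2 2)) * hc11 + (2) * hr11 + (2*(A 2 1) - 2*(A 1 2)) * hc12 + (-1 + 2*(A 1 1)) * hc22 + (2 - 2*(A 2 2) + 2*(A 1 1)) * hg00 + (-2*(A 0 1)) * hg01 + (2*(A 0 2)) * hg02
    · linear_combination (-2*(A 2 1) - 2*(A 1 2)) * hss + (-2*(A 2 1)) * hc00 + (2*(A 2 1)) * hr00 + (2*(A 2 0)) * hc01 + (-2*(A 0 1)) * hr02 + (2*(A 1 2)) * hc11 + (2*(A 2 1)) * hr11 + (2 - 2*(A 1 1)) * hc12 + (2 - 2*(A 1 1)) * hr12 + (2*(A 2 1) + 2*(A 1 2)) * hg00 + (-2*(A 0 2)) * hg01 + (-2*(A 0 1)) * hg02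
    · linear_combination (-2*(A 2 0) + 2*(A 0 2)) * hss + (2) * hc02 + (-2) * hr02 + (-2*(A 0 2)) * hc11 + (2*(A 0 1)) * hc12 + (2*(A 2 1)) * hg01 + (2 - 2*(A 1 1)) * hg02
    · linear_combination (-2*(A 2 1) - 2*(A 1 2)) * hss + (-2*(A 2 1)) * hc00 + (2*(A 2 1)) * hr00 + (2*(A 2 0)) * hc01 + (-2*(A 0 1)) * hr02 + (2*(A 1 2)) * hc11 + (2*(A 2 1)) * hr11 + (2 - 2*(A 1 1)) * hc12 + (2 - 2*(A 1 1)) * hr12 + (2*(A 2 1) + 2*(A 1 2)) * hg00 + (-2*(A 0 2)) * hg01 + (-2*(A 0 1)) * hg02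
    · linear_combination (-1 - s*s - 3*(A 2 2) + (A 1 1) - (A 0 0)) * hss + (1) * hc00 + (-2) * hr00 + (1 + 2*(A 2 2)) * hc11 + (-2) * hr11 + (-2*(A 2 1) + 2*(A 1 2)) * hc12 + (3 - 2*(A 1 1)) * hc22 + (2 + 2*(A 2 2) - 2*(A 1 1)) * hg00 + (2*(A 0 1)) * hg01 + (-2*(A 0 2)) * hg02
  rcases le_or_gt 1 (1 - A 0 0 + A 1 1 - A 2 2) with ht2 | ht2
  · -- case 2
    set s := Real.sqrt (1 - A 0 0 + A 1 1 - A 2 2) with hsdef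
    have hss : s ^ 2 = 1 - A 0 0 + A 1 1 - A 2 2 := Real.sq_sqrt (by linarith)
    have hs : s ≠ 0 := by
      intro h0
      rw [h0] at hss
      simp at hss
      linarith
    refine build' A (A 0 2 - A 2 0) (A 0 1 + A 1 0) (s^2) (A 1 2 + A 2 1) s hs ?_ ?_ ?_ ?_ ?_ ?_ ?_ ?_ ?_ ?_
    · linear_combination (-3 + s*s - (A 2 2) + (A 1 1) - (A 0 0)) * hss + (1) * hc00 + (1 - 2*(A 2 2)) * hc11 + (2*(A 2 1) - 2*(A 1 2)) * hc12 + (1 + 2*(A 1 1)) * hc22 + (-2 - 2*(A 2 2) + 2*(A 1 1)) * hg00 + (-2*(A 0 1)) * hg01 + (2*(A 0 2)) * hg02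
    · linear_combination (-1 - s*s + (A 2 2) - (A 1 1) - 3*(A 0 0)) * hss + (1) * hc00 + (2) * hr00 + (-1 - 2*(A 2 2)) * hc11 + (2*(A 2 1) - 2*(A 1 2)) * hc12 + (-1 + 2*(A 1 1)) * hc22 + (2 - 2*(A 2 2) + 2*(A 1 1)) * hg00 + (-2*(A 0 1)) * hg01 + (2*(A 0 2)) * hg02
    · linear_combination (2*(A 1 0) - 2*(A 0 1)) * hss + (-2*(A 0 1)) * hr00 + (2 + 2*(A 0 0)) * hc01 + (-2 - 2*(A 1 1)) * hr01 + (-2*(A 2 1)) * hr02 + (2*(A 0 1)) * hc11 + (2*(A 0 1)) * hc22 + (-2 + 2*(A 2 2)) * hg01 + (-2*(A 1 2)) * hg02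
    · linear_combination (-2*(A 2 0) - 2*(A 0 2)) * hss + (2) * hc02 + (2) * hr02 + (2*(A 0 2)) * hc11 + (-2*(A 0 1)) * hc12 + (-2*(A 2 1)) * hg01 + (2 + 2*(A 1 1)) * hg02
    · linear_combination (-2*(A 1 0) + 2*(A 0 1)) * hss + (2*(A 0 1)) * hr00 + (-2 - 2*(A 0 0)) * hc01 + (2 + 2*(A 1 1)) * hr01 + (2*(A 2 1)) * hr02 + (-2*(A 0 1)) * hc11 + (-2*(A 0 1)) * hc22 + (2 - 2*(A 2 2)) * hg01 + (2*(A 1 2)) * hg02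
    · linear_combination (1 + s*s - (A 2 2) - 3*(A 1 1) - (A 0 0)) * hss + (1) * hc00 + (-1 + 2*(A 2 2)) * hc11 + (-2) * hr11 + (-2*(A 2 1) - 2*(A 1 2)) * hc12 + (1 + 2*(A 1 1)) * hc22 + (2 - 2*(A 2 2) - 2*(A 1 1)) * hg00 + (2*(A 0 1)) * hg01 + (2*(A 0 2)) * hg02
    · linear_combination (2*(A 2 1) - 2*(A 1 2)) * hss + (2*(A 2 1)) * hc00 + (-2*(A 2 1)) * hr00 + (-2*(A 2 0)) * hc01 + (2*(A 0 1)) * hr02 + (2*(A 1 2)) * hc11 + (-2*(A 2 1)) * hr11 + (-2 - 2*(A 1 1)) * hc12 + (2 + 2*(A 1 1)) * hr12 + (2*(A 2 1) - 2*(A 1 2)) * hg00 + (2*(A 0 2)) * hg01 + (-2*(A 0 1)) * hg02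
    · linear_combination (-2*(A 2 0) - 2*(A 0 2)) * hss + (2) * hc02 + (2) * hr02 + (2*(A 0 2)) * hc11 + (-2*(A 0 1)) * hc12 + (-2*(A 2 1)) * hg01 + (2 + 2*(A 1 1)) * hg02
    · linear_combination (-2*(A 2 1) + 2*(A 1 2)) * hss + (-2*(A 2 1)) * hc00 + (2*(A 2 1)) * hr00 + (2*(A 2 0)) * hc01 + (-2*(A 0 1)) * hr02 + (-2*(A 1 2)) * hc11 + (2*(A 2 1)) * hr11 + (2 + 2*(A 1 1)) * hc12 + (-2 - 2*(A 1 1)) * hr12 + (-2*(A 2 1) + 2*(A 1 2)) * hg00 + (-2*(A 0 2)) * hg01 + (2*(A 0 1)) * hg02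
    · linear_combination (-1 - s*s - 3*(A 2 2) - (A 1 1) + (A 0 0)) * hss + (1) * hc00 + (-2) * hr00 + (1 + 2*(A 2 2)) * hc11 + (-2) * hr11 + (-2*(A 2 1) - 2*(A 1 2)) * hc12 + (3 + 2*(A 1 1)) * hc22 + (-2 - 2*(A 2 2) - 2*(A 1 1)) * hg00 + (2*(A 0 1)) * hg01 + (2*(A 0 2)) * hg02
  -- case 3
  have ht3 : 1 ≤ 1 - A 0 0 - A 1 1 + A 2 2 := by linarith
  set s := Real.sqrt (1 - A 0 0 - A 1 1 + A 2 2) with hsdef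
  have hss : s ^ 2 = 1 - A 0 0 - A 1 1 + A 2 2 := Real.sq_sqrt (by linarith)
  have hs : s ≠ 0 := by
    intro h0
    rw [h0] at hss
    simp at hss
    linarith
  refine build' A (A 1 0 - A 0 1) (A 0 2 + A 2 0) (A 1 2 + A 2 1) (s^2) s hs ?_ ?_ ?_ ?_ ?_ ?_ ?_ ?_ ?_ ?_
  · linear_combination (-3 + s*s + (A 2 2) - (A 1 1) - (A 0 0)) * hss + (1) * hc00 + (1 + 2*(A 2 2)) * hc11 + (-2*(A 2 1) + 2*(A 1 2)) * hc12 + (1 - 2*(A 1 1)) * hc22 + (-2 + 2*(A 2 2) - 2*(A 1 1)) * hg00 + (2*(A 0 1)) * hg01 + (-2*(A 0 2)) * hg02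
  · linear_combination (-1 - s*s - (A 2 2) + (A 1 1) - 3*(A 0 0)) * hss + (1) * hc00 + (2) * hr00 + (-1 + 2*(A 2 2)) * hc11 + (-2*(A 2 1) + 2*(A 1 2)) * hc12 + (-1 - 2*(A 1 1)) * hc22 + (2 + 2*(A 2 2) - 2*(A 1 1)) * hg00 + (2*(A 0 1)) * hg01 + (-2*(A 0 2)) * hg02
  · linear_combination (-2*(A 1 0) - 2*(A 0 1)) * hss + (-2*(A 0 1)) * hr00 + (2 + 2*(A 0 0)) * hc01 + (2 - 2*(A 1 1)) * hr01 + (-2*(A 2 1)) * hr02 + (2*(A 0 1)) * hc11 + (2*(A 0 1)) * hc22 + (2 + 2*(A 2 2)) * hg01 + (-2*(A 1 2)) * hg02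
  · linear_combination (2*(A 2 0) - 2*(A 0 2)) * hss + (2) * hc02 + (-2) * hr02 + (2*(A 0 2)) * hc11 + (-2*(A 0 1)) * hc12 + (-2*(A 2 1)) * hg01 + (-2 + 2*(A 1 1)) * hg02
  · linear_combination (-2*(A 1 0) - 2*(A 0 1)) * hss + (-2*(A 0 1)) * hr00 + (2 + 2*(A 0 0)) * hc01 + (2 - 2*(A 1 1)) * hr01 + (-2*(A 2 1)) * hr02 + (2*(A 0 1)) * hc11 + (2*(A 0 1)) * hc22 + (2 + 2*(A 2 2)) * hg01 + (-2*(A 1 2)) * hg02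
  · linear_combination (-1 - s*s - (A 2 2) - 3*(A 1 1) + (A 0 0)) * hss + (-1) * hc00 + (1 + 2*(A 2 2)) * hc11 + (2) * hr11 + (-2*(A 2 1) - 2*(A 1 2)) * hc12 + (-1 + 2*(A 1 1)) * hc22 + (-2 - 2*(A 2 2) - 2*(A 1 1)) * hg00 + (2*(A 0 1)) * hg01 + (2*(A 0 2)) * hg02
  · linear_combination (2*(A 2 1) - 2*(A 1 2)) * hss + (2*(A 2 1)) * hc00 + (-2*(A 2 1)) * hr00 + (-2*(A 2 0)) * hc01 + (2*(A 0 1)) * hr02 + (2*(A 1 2)) * hc11 + (-2*(A 2 1)) * hr11 + (2 - 2*(A 1 1)) * hc12 + (-2 + 2*(A 1 1)) * hr12 + (2*(A 2 1) - 2*(A 1 2)) * hg00 + (2*(A 0 2)) * hg01 + (-2*(A 0 1)) * hg02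
  · linear_combination (-2*(A 2 0) + 2*(A 0 2)) * hss + (-2) * hc02 + (2) * hr02 + (-2*(A 0 2)) * hc11 + (2*(A 0 1)) * hc12 + (2*(A 2 1)) * hg01 + (2 - 2*(A 1 1)) * hg02
  · linear_combination (-2*(A 2 1) + 2*(A 1 2)) * hss + (-2*(A 2 1)) * hc00 + (2*(A 2 1)) * hr00 + (2*(A 2 0)) * hc01 + (-2*(A 0 1)) * hr02 + (-2*(A 1 2)) * hc11 + (2*(A 2 1)) * hr11 + (-2 + 2*(A 1 1)) * hc12 + (2 - 2*(A 1 1)) * hr12 + (-2*(A 2 1) + 2*(A 1 2)) * hg00 + (-2*(A 0 2)) * hg01 + (2*(A 0 1)) * hg02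
  · linear_combination (1 + s*s - 3*(A 2 2) - (A 1 1) - (A 0 0)) * hss + (-1) * hc00 + (2) * hr00 + (-1 + 2*(A 2 2)) * hc11 + (2) * hr11 + (-2*(A 2 1) - 2*(A 1 2)) * hc12 + (-3 + 2*(A 1 1)) * hc22 + (2 - 2*(A 2 2) - 2*(A 1 1)) * hg00 + (2*(A 0 1)) * hg01 + (2*(A 0 2)) * hg02
end
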